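/- Let α ∈ (0,1] and let x ∈ (0, ᾱ) be irrational. Then for every n ≥ 0 one has 1/(1+α) < β_{α,n}·q_{α,n+1} < 1/α. -/

import Mathlib

open Set Filter

/-- The `α`-continued fraction map `A_α(x) = |1/x − ⌊1/x + 1 − α⌋|`. -/
noncomputable def Aa (α : ℝ) (x : ℝ) : ℝ := |1 / x - ⌊1 / x + 1 - α⌋|

/-- The orbit `x_{α,n}` of `x` under `A_α` (with `x_{α,0} = x`). -/
noncomputable def xa (α x : ℝ) (n : ℕ) : ℝ := (Aa α)^[n] x

/-- `betaP α x (n+1) = β_{α,n} = x_{α,0}⋯x_{α,n}`; `betaP α x 0 = β_{α,-1} = 1`. -/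
noncomputable def betaP (α x : ℝ) (n : ℕ) : ℝ := ∏ i ∈ Finset.range n, xa α x i

/-- `aa α x n = a_{α,n+1} = ⌊1/x_{α,n} + 1 − α⌋`. -/
noncomputable def aa (α x : ℝ) (n : ℕ) : ℤ := ⌊1 / xa α x n + 1 - α⌋

/-- `ea α x n = ε_{α,n}`: `ε_{α,0} = 1` and `ε_{α,n+1} = sign(1/x_{α,n} − a_{α,n+1})`. -/
noncomputable def ea (α x : ℝ) : ℕ → ℝ
  | 0 => 1
  | n + 1 => if 0 < 1 / xa α x n - aa α x n then 1 else -1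

/-- `pa α x (n+1) = p_{α,n}`; `pa α x 0 = p_{α,-1} = 1`. -/
noncomputable def pa (α x : ℝ) : ℕ → ℝ
  | 0 => 1
  | 1 => 0
  | n + 2 => aa α x n * pa α x (n + 1) + ea α x n * pa α x n

/-- `qa α x (n+1) = q_{α,n}`; `qa α x 0 = q_{α,-1} = 0`. -/
noncomputable def qa (α x : ℝ) : ℕ → ℝ
  | 0 => 0
  | 1 => 1
  | n + 2 => aa α x n * qa α x (n + 1) + ea α x n * qa α x n


lemma xa_succ (α x : ℝ) (n : ℕ) :
    xa α x (n + 1) = |1 / xa α x n - (aa α x n : ℝ)| := by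
  unfold xa aa
  rw [Function.iterate_succ_apply']
  rfl

lemma d_lb (α x : ℝ) (n : ℕ) : α - 1 ≤ 1 / xa α x n - (aa α x n : ℝ) := by
  have := Int.floor_le (1 / xa α x n + 1 - α)
  unfold aa; push_cast; linarith

lemma d_ub (α x : ℝ) (n : ℕ) : 1 / xa α x n - (aa α x n : ℝ) < α := by
  have := Int.sub_one_lt_floor (1 / xa α x n + 1 - α)
  unfold aa; push_cast; linarith

section main
variable {α x : ℝ} (hα : α ∈ Set.Ioc (0 : ℝ) 1) (hirr : Irrational x)
  (hx : x ∈ Set.Ioo 0 (max α (1 - α)))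

include hα hirr hx

lemma xa_facts : ∀ n, Irrational (xa α x n) ∧ 0 < xa α x n ∧ xa α x n ≤ max α (1 - α) := by
  intro n
  induction n with
  | zero => exact ⟨hirr, hx.1, le_of_lt hx.2⟩
  | succ n ih =>
    obtain ⟨hi, hp, hle⟩ := ih
    have hi' : Irrational (1 / xa α x n - (aa α x n : ℝ)) := by
      rw [one_div]
      exact (hi.inv).sub_intCast _
    have hirr' : Irrational (xa α x (n + 1)) := by
      rw [xa_succ]
      rcases abs_cases (1 / xa α x n - (aa α x n : ℝ)) with ⟨h, _⟩ | ⟨h, _⟩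
      · rw [h]; exact hi'
      · rw [h]; exact hi'.neg
    have hne : 1 / xa α x n - (aa α x n : ℝ) ≠ 0 := hi'.ne_zero
    refine ⟨hirr', ?_, ?_⟩
    · rw [xa_succ]; exact abs_pos.mpr hne
    · rw [xa_succ]
      have h1 := d_lb α x n
      have h2 := d_ub α x n
      have ha := le_max_left α (1 - α)
      have hb := le_max_right α (1 - α)
      rw [abs_le]
      constructor <;> linarith

lemma xa_pos (n : ℕ) : 0 < xa α x n := (xa_facts hα hirr hx n).2.1

lemma d_ne (n : ℕ) : 1 / xa α x n - (aa α x n : ℝ) ≠ 0 := by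
  have hi := (xa_facts hα hirr hx n).1
  have : Irrational (1 / xa α x n - (aa α x n : ℝ)) := by
    rw [one_div]; exact (hi.inv).sub_intCast _
  exact this.ne_zero

/-- `ε_{n+1} x_{n+1} = 1/x_n - a_{n+1}` -/
lemma ea_mul_xa (n : ℕ) :
    ea α x (n + 1) * xa α x (n + 1) = 1 / xa α x n - (aa α x n : ℝ) := by
  have hne := d_ne hα hirr hx n
  rw [xa_succ, ea]
  split_ifs with h
  · rw [one_mul, abs_of_pos h]
  · push_neg at h
    rw [abs_of_neg (lt_of_le_of_ne h hne), neg_one_mul, neg_neg]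

lemma aa_ge_one (n : ℕ) : (1 : ℝ) ≤ (aa α x n : ℝ) := by
  have hp := (xa_facts hα hirr hx n).2.1
  have hle := (xa_facts hα hirr hx n).2.2
  have hmax : max α (1 - α) ≤ 1 := max_le hα.2 (by linarith [hα.1])
  have h1 : 1 ≤ 1 / xa α x n := by
    rw [le_div_iff₀ hp]; linarith
  have : (1 : ℤ) ≤ aa α x n := by
    rw [aa, Int.le_floor]
    push_cast
    linarith [hα.2]
  exact_mod_cast this

/-- If `ε_{n+1} = -1` then `x_{n+1} ≤ 1 - α`. -/
lemma xa_le_of_ea_neg (n : ℕ) (h : ea α x (n + 1) = -1) : xa α x (n + 1) ≤ 1 - α := by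
  have hd := d_lb α x n
  rw [ea] at h
  split_ifs at h with hc
  · norm_num at h
  · push_neg at hc
    rw [xa_succ, abs_of_nonpos hc]
    linarith

/-- If `ε_{n+1} = -1` then `a_{n+2} ≥ 2`. -/
lemma aa_ge_two (n : ℕ) (h : ea α x (n + 1) = -1) : (2 : ℝ) ≤ (aa α x (n + 1) : ℝ) := by
  have hle := xa_le_of_ea_neg hα hirr hx n h
  have hp := xa_pos hα hirr hx (n + 1)
  have hα1 : α < 1 := by nlinarith
  have h2 : 1 + α ≤ 1 / xa α x (n + 1) := by
    rw [le_div_iff₀ hp]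
    nlinarith [mul_le_mul_of_nonneg_left hle (by linarith [hα.1] : (0:ℝ) ≤ 1 + α), mul_pos hα.1 hα.1]
  have : (2 : ℤ) ≤ aa α x (n + 1) := by
    rw [aa, Int.le_floor]
    push_cast
    linarith
  exact_mod_cast this

lemma ea_cases (n : ℕ) : ea α x n = 1 ∨ ea α x n = -1 := by
  cases n with
  | zero => left; rfl
  | succ n => rw [ea]; split_ifs <;> simp

lemma qa_mono : ∀ n, 0 ≤ qa α x n ∧ qa α x n ≤ qa α x (n + 1) ∧ 1 ≤ qa α x (n + 1) := by
  intro n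
  induction n with
  | zero => refine ⟨le_refl 0, ?_, ?_⟩ <;> simp [qa]
  | succ n ih =>
    obtain ⟨h0, h1, h2⟩ := ih
    have ha1 := aa_ge_one hα hirr hx n
    have hq2 : qa α x (n + 2) = (aa α x n : ℝ) * qa α x (n + 1) + ea α x n * qa α x n := rfl
    refine ⟨by linarith, ?_, ?_⟩ <;>
    · rcases ea_cases (α := α) (x := x) hα hirr hx n with he | he
      · rw [hq2, he]; nlinarith
      · have ha2 : (2 : ℝ) ≤ (aa α x n : ℝ) := by
          cases n with
          | zero => rw [show ea α x 0 = 1 from rfl] at he; norm_num at he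
          | succ m => exact aa_ge_two hα hirr hx m he
        rw [hq2, he]; nlinarith

/-- Key identity `β_n q_{n+1} + (1/x_n - a_{n+1}) β_n q_n = 1`. -/
lemma key_identity : ∀ n, betaP α x (n + 1) * qa α x (n + 2)
    + (1 / xa α x n - (aa α x n : ℝ)) * (betaP α x (n + 1) * qa α x (n + 1)) = 1 := by
  intro n
  induction n with
  | zero =>
    have hx0 : xa α x 0 ≠ 0 := (xa_pos hα hirr hx 0).ne'
    have hinv : xa α x 0 * (1 / xa α x 0) = 1 := by field_simp
    have hb : betaP α x 1 = xa α x 0 := by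
      rw [betaP, Finset.prod_range_one]
    have hq2 : qa α x 2 = (aa α x 0 : ℝ) * qa α x 1 + ea α x 0 * qa α x 0 := rfl
    rw [hb, hq2, show qa α x 1 = 1 from rfl, show qa α x 0 = 0 from rfl,
      show ea α x 0 = 1 from rfl]
    linear_combination hinv
  | succ n ih =>
    have hxp : xa α x (n + 1) ≠ 0 := (xa_pos hα hirr hx (n + 1)).ne'
    have hinv : xa α x (n + 1) * (1 / xa α x (n + 1)) = 1 := by field_simp
    have hE := ea_mul_xa hα hirr hx n
    have hb : betaP α x (n + 2) = betaP α x (n + 1) * xa α x (n + 1) := by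
      rw [betaP, betaP, Finset.prod_range_succ]
    have hq3 : qa α x (n + 3) = (aa α x (n + 1) : ℝ) * qa α x (n + 2)
        + ea α x (n + 1) * qa α x (n + 1) := rfl
    rw [hb, hq3]
    linear_combination ih + (betaP α x (n + 1) * qa α x (n + 1)) * hE
      + (betaP α x (n + 1) * qa α x (n + 2)) * hinv

/-- Corner exclusion: if `1/x_n - a_{n+1} = α - 1` exactly, then `q_n < q_{n+1}`. -/
lemma corner (n : ℕ) (hd : 1 / xa α x n - (aa α x n : ℝ) = α - 1) :
    qa α x (n + 1) < qa α x (n + 2) := by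
  have hne := d_ne hα hirr hx n
  have hα1 : α < 1 := by
    rcases lt_or_eq_of_le hα.2 with h | h
    · exact h
    · exfalso; apply hne; rw [hd, h]; ring
  have hp := xa_pos hα hirr hx n
  have hle := (xa_facts hα hirr hx n).2.2
  have hmax : max α (1 - α) < 1 := by
    apply max_lt hα1; linarith [hα.1]
  have hxlt : xa α x n < 1 := lt_of_le_of_lt hle hmax
  have hinv : 1 < 1 / xa α x n := by
    rw [lt_div_iff₀ hp]; linarith
  have haar : (2 : ℝ) - α < (aa α x n : ℝ) := by linarith
  have haa2 : (2 : ℤ) ≤ aa α x n := by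
    have h1 : (1 : ℝ) < (aa α x n : ℝ) := by linarith
    exact_mod_cast (by exact_mod_cast h1 : (1 : ℤ) < aa α x n)
  obtain ⟨h0, h1, h2⟩ := qa_mono hα hirr hx n
  have hq2 : qa α x (n + 2) = (aa α x n : ℝ) * qa α x (n + 1) + ea α x n * qa α x n := rfl
  have haa2r : (2 : ℝ) ≤ (aa α x n : ℝ) := by exact_mod_cast haa2
  rcases ea_cases (α := α) (x := x) hα hirr hx n with he | he
  · rw [hq2, he]; nlinarith
  · cases n with
    | zero => rw [show ea α x 0 = 1 from rfl] at he; norm_num at he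
    | succ m =>
      rcases eq_or_lt_of_le haa2 with ha | ha
      · -- aa = 2 : contradiction with x_n ≤ 1 - α
        exfalso
        have hxle : xa α x (m + 1) ≤ 1 - α := xa_le_of_ea_neg hα hirr hx m he
        have h1x : 1 / xa α x (m + 1) = 1 + α := by
          rw [show ((aa α x (m+1) : ℤ) : ℝ) = 2 by exact_mod_cast ha.symm] at hd
          linarith
        have hxx : (1 + α) * xa α x (m + 1) = 1 := by
          rw [← h1x]; field_simp
        nlinarith [hα.1, mul_pos hα.1 hα.1]
      · have ha3 : (3 : ℝ) ≤ (aa α x (m + 1) : ℝ) := by exact_mod_cast ha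
        rw [hq2, he]; nlinarith

theorem beta_mul_q_bounds' (n : ℕ) :
    1 / (1 + α) < betaP α x (n + 1) * qa α x (n + 2) ∧
      betaP α x (n + 1) * qa α x (n + 2) < 1 / α := by
  have key := key_identity hα hirr hx n
  set d : ℝ := 1 / xa α x n - (aa α x n : ℝ) with hdd
  set Q : ℝ := qa α x (n + 2) with hQ
  set q : ℝ := qa α x (n + 1) with hq
  set u : ℝ := betaP α x (n + 1) * Q with hu
  have hQ1 : 1 ≤ Q := (qa_mono hα hirr hx (n + 1)).2.2
  have hqQ : q ≤ Q := (qa_mono hα hirr hx (n + 1)).2.1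
  have hq1 : 1 ≤ q := (qa_mono hα hirr hx n).2.2
  have hdub : d < α := d_ub α x n
  have hdlb : α - 1 ≤ d := d_lb α x n
  have hdne : d ≠ 0 := d_ne hα hirr hx n
  have hQeq : u * (Q + d * q) = Q := by
    rw [hu]; linear_combination Q * key
  have hup : d * q < α * Q := by
    nlinarith [mul_lt_mul_of_pos_right hdub (show (0:ℝ) < q by linarith),
      mul_le_mul_of_nonneg_left hqQ hα.1.le]
  have hlow : (α - 1) * Q < d * q := by
    rcases lt_or_eq_of_le hdlb with h | h
    · rcases lt_trichotomy d 0 with hd0 | hd0 | hd0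
      · have ha : d * Q ≤ d * q := by
          nlinarith [mul_nonneg (neg_nonneg.mpr hd0.le) (sub_nonneg.mpr hqQ)]
        nlinarith
      · exact absurd hd0 hdne
      · nlinarith [hα.2]
    · have hα1 : α < 1 := by
        rcases lt_or_eq_of_le hα.2 with h' | h'
        · exact h'
        · exfalso; apply hdne; rw [← h, h']; ring
      have hqQ' : q < Q := corner hα hirr hx n h.symm
      have hd0 : d < 0 := by rw [← h]; linarith
      nlinarith [mul_pos (neg_pos.mpr hd0) (sub_pos.mpr hqQ')]
  have hDpos : 0 < Q + d * q := by nlinarith [hα.1]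
  have huD : u = Q / (Q + d * q) := by
    rw [eq_div_iff hDpos.ne']; exact hQeq
  have h1α : (0 : ℝ) < 1 + α := by linarith [hα.1]
  constructor
  · rw [huD, div_lt_div_iff₀ h1α hDpos]
    nlinarith
  · rw [huD, div_lt_div_iff₀ hDpos hα.1]
    nlinarith

end main

/-- For `α ∈ (0,1]` and `x ∈ (0, ᾱ)` irrational, `1/(1+α) < β_{α,n}·q_{α,n+1} < 1/α`
for every `n ≥ 0`. -/
theorem beta_mul_q_bounds (α : ℝ) (hα : α ∈ Set.Ioc (0 : ℝ) 1) (x : ℝ)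
    (hirr : Irrational x) (hx : x ∈ Set.Ioo 0 (max α (1 - α))) (n : ℕ) :
    1 / (1 + α) < betaP α x (n + 1) * qa α x (n + 2) ∧
      betaP α x (n + 1) * qa α x (n + 2) < 1 / α :=
  beta_mul_q_bounds' hα hirr hx n
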